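/- Let S ⊂ ℝⁿ be a closed, convex, pointed set and S₁ = {x ∈ S : c₁ᵀx ≥ c₁₀}, S₂ = {x ∈ S : c₂ᵀx ≥ c₂₀} with S₁ ⊄ S₂ and S₂ ⊄ S₁. Then the closed convex hull of S₁ ∪ S₂ equals conv(S₁⁺ ∪ S₂⁺), where S₁⁺ := S₁ + rec S₂ and S₂⁺ := S₂ + rec S₁ (rec denotes the recession cone). -/

import Mathlib

open Set Pointwise

/-- Dot product on `Fin n → ℝ`. -/
def dot {n : ℕ} (c x : Fin n → ℝ) : ℝ := ∑ i, c i * x i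

/-- Recession cone of a set `S ⊆ ℝⁿ`. -/
def recCone {n : ℕ} (S : Set (Fin n → ℝ)) : Set (Fin n → ℝ) :=
  {r | ∀ x ∈ S, ∀ t : ℝ, 0 ≤ t → x + t • r ∈ S}

open Filter

variable {n : ℕ}

lemma dot_add' (c x y : Fin n → ℝ) : dot c (x + y) = dot c x + dot c y := by
  simp [dot, mul_add, Finset.sum_add_distrib]

lemma dot_smul' (c : Fin n → ℝ) (s : ℝ) (x : Fin n → ℝ) : dot c (s • x) = s * dot c x := by
  simp [dot, Finset.mul_sum, mul_left_comm]

lemma continuous_dot (c : Fin n → ℝ) : Continuous (dot c) :=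
  continuous_finset_sum _ fun i _ => continuous_const.mul (continuous_apply i)

lemma zero_mem_recCone (A : Set (Fin n → ℝ)) : (0 : Fin n → ℝ) ∈ recCone A := by
  intro x hx t ht; simpa using hx

lemma recCone_add {A : Set (Fin n → ℝ)} {r r' : Fin n → ℝ}
    (hr : r ∈ recCone A) (hr' : r' ∈ recCone A) : r + r' ∈ recCone A := by
  intro x hx t ht
  have := hr' (x + t • r) (hr x hx t ht) t ht
  simpa [smul_add, add_assoc] using this

lemma recCone_smul {A : Set (Fin n → ℝ)} {s : ℝ} (hs : 0 ≤ s) {r : Fin n → ℝ}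
    (hr : r ∈ recCone A) : s • r ∈ recCone A := by
  intro x hx t ht
  have := hr x hx (t * s) (mul_nonneg ht hs)
  simpa [mul_smul] using this

lemma add_mem_of_mem_recCone {A : Set (Fin n → ℝ)} {x r : Fin n → ℝ}
    (hx : x ∈ A) (hr : r ∈ recCone A) : x + r ∈ A := by
  have := hr x hx 1 zero_le_one
  simpa using this

lemma convex_recCone (A : Set (Fin n → ℝ)) : Convex ℝ (recCone A) := by
  intro u hu v hv a b ha hb hab
  exact recCone_add (recCone_smul ha hu) (recCone_smul hb hv)

lemma isClosed_recCone {A : Set (Fin n → ℝ)} (hA : IsClosed A) : IsClosed (recCone A) := by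
  have : recCone A = ⋂ x ∈ A, ⋂ t ∈ Ici (0:ℝ), (fun r => x + t • r) ⁻¹' A := by
    ext r; simp [recCone, Set.mem_iInter, mem_Ici]
  rw [this]
  refine isClosed_biInter fun x hx => isClosed_biInter fun t ht => ?_
  exact hA.preimage (continuous_const.add (continuous_const_smul t))
lemma smul_tendsto_mem_recCone {A : Set (Fin n → ℝ)} (hA : IsClosed A) (hAc : Convex ℝ A)
    {x : ℕ → Fin n → ℝ} (hx : ∀ k, x k ∈ A) {s : ℕ → ℝ} (hs0 : ∀ k, 0 ≤ s k)
    (hs : Tendsto s atTop (nhds 0)) {u : Fin n → ℝ}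
    (hu : Tendsto (fun k => s k • x k) atTop (nhds u)) : u ∈ recCone A := by
  intro y hy t ht
  have hc : Tendsto (fun k => t * s k) atTop (nhds 0) := by
    simpa using hs.const_mul t
  have hw : Tendsto (fun k => (1 - t * s k) • y + (t * s k) • x k) atTop
      (nhds ((1 - 0 : ℝ) • y + t • u)) := by
    refine Tendsto.add ?_ ?_
    · exact (tendsto_const_nhds.sub hc).smul_const y
    · have : (fun k => (t * s k) • x k) = fun k => t • (s k • x k) := by
        funext k; rw [smul_smul]
      rw [this]
      exact hu.const_smul t
  have hmem : ∀ᶠ k in atTop, (1 - t * s k) • y + (t * s k) • x k ∈ A := by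
    have h1 : ∀ᶠ k in atTop, t * s k ≤ 1 := by
      have := hc.eventually_le_const (show (0:ℝ) < 1 by norm_num)
      exact this
    filter_upwards [h1] with k hk1
    exact hAc hy (hx k) (by linarith) (mul_nonneg ht (hs0 k)) (by ring)
  have := hA.mem_of_tendsto hw hmem
  simpa using this

lemma recCone_subset {A B : Set (Fin n → ℝ)} (hB : IsClosed B) (hBc : Convex ℝ B)
    (hAB : A ⊆ B) (hA : A.Nonempty) : recCone A ⊆ recCone B := by
  obtain ⟨y₀, hy₀⟩ := hA
  intro r hr
  have hmem : ∀ k : ℕ, y₀ + (k : ℝ) • r ∈ B := fun k => hAB (hr y₀ hy₀ k (Nat.cast_nonneg k))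
  have h0 : Tendsto (fun k : ℕ => ((k : ℝ) + 1)⁻¹) atTop (nhds 0) := by
    simpa [one_div] using tendsto_one_div_add_atTop_nhds_zero_nat (𝕜 := ℝ)
  refine smul_tendsto_mem_recCone hB hBc (x := fun k => y₀ + (k : ℝ) • r) hmem
    (s := fun k => ((k : ℝ) + 1)⁻¹) (fun k => by positivity) h0 ?_
  have h1 : Tendsto (fun k : ℕ => ((k : ℝ) + 1)⁻¹ • y₀ + (((k : ℝ) + 1)⁻¹ * k) • r) atTop
      (nhds ((0 : ℝ) • y₀ + (1 : ℝ) • r)) := by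
    refine Tendsto.add (h0.smul_const y₀) (Tendsto.smul_const ?_ r)
    have : (fun k : ℕ => ((k : ℝ) + 1)⁻¹ * k) = fun k : ℕ => 1 - ((k : ℝ) + 1)⁻¹ := by
      funext k
      have hk : ((k : ℝ) + 1) ≠ 0 := by positivity
      field_simp
      ring
    rw [this]
    simpa using tendsto_const_nhds.sub h0
  have heq : (fun k : ℕ => ((k : ℝ) + 1)⁻¹ • (y₀ + (k : ℝ) • r)) =
      fun k : ℕ => ((k : ℝ) + 1)⁻¹ • y₀ + (((k : ℝ) + 1)⁻¹ * k) • r := by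
    funext k; rw [smul_add, smul_smul]
  rw [heq]
  simpa using h1
lemma tendsto_atTop_of_inv_tendsto_zero {f : ℕ → ℝ} (hf : ∀ k, 1 ≤ f k)
    (h : Tendsto (fun k => (f k)⁻¹) atTop (nhds 0)) : Tendsto f atTop atTop := by
  rw [tendsto_atTop]
  intro b
  have hb : (0:ℝ) < (max b 1)⁻¹ := by positivity
  filter_upwards [h.eventually_lt_const hb] with k hk
  have hfk : (0:ℝ) < f k := lt_of_lt_of_le zero_lt_one (hf k)
  have : max b 1 < f k := by
    have := (inv_strictAnti₀ (by positivity) hk)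
    simpa using this
  exact le_of_lt (lt_of_le_of_lt (le_max_left b 1) this)
lemma isClosed_add_of_pointed {A K' : Set (Fin n → ℝ)}
    (hA : IsClosed A) (hAc : Convex ℝ A)
    (hK : IsClosed K') (hKs : ∀ s : ℝ, 0 ≤ s → ∀ r ∈ K', s • r ∈ K')
    (hpt : ∀ u ∈ recCone A, ∀ v ∈ K', u + v = 0 → u = 0 ∧ v = 0) :
    IsClosed (A + K') := by
  refine IsSeqClosed.isClosed ?_
  intro w z hw hwz
  choose x hx p hp hxp using fun k => Set.mem_add.1 (hw k)
  set M : ℕ → ℝ := fun k => max 1 (max ‖x k‖ ‖p k‖) with hM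
  have hM1 : ∀ k, 1 ≤ M k := fun k => le_max_left _ _
  have hM0 : ∀ k, 0 < M k := fun k => lt_of_lt_of_le zero_lt_one (hM1 k)
  have hMx : ∀ k, ‖x k‖ ≤ M k := fun k => le_trans (le_max_left _ _) (le_max_right _ _)
  have hMp : ∀ k, ‖p k‖ ≤ M k := fun k => le_trans (le_max_right _ _) (le_max_right _ _)
  set Q : ℕ → ℝ × ((Fin n → ℝ) × (Fin n → ℝ)) :=
    fun k => ((M k)⁻¹, ((M k)⁻¹ • x k, (M k)⁻¹ • p k)) with hQ
  have hQball : ∀ k, Q k ∈ Metric.closedBall (0 : ℝ × ((Fin n → ℝ) × (Fin n → ℝ))) 1 := by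
    intro k
    rw [Metric.mem_closedBall, dist_zero_right]
    have h1 : |(M k)⁻¹| ≤ 1 := by
      rw [abs_of_nonneg (le_of_lt (inv_pos.2 (hM0 k)))]
      exact inv_le_one_of_one_le₀ (hM1 k)
    have h2 : ‖(M k)⁻¹ • x k‖ ≤ 1 := by
      rw [norm_smul, Real.norm_eq_abs, abs_of_nonneg (le_of_lt (inv_pos.2 (hM0 k)))]
      calc (M k)⁻¹ * ‖x k‖ ≤ (M k)⁻¹ * M k :=
            mul_le_mul_of_nonneg_left (hMx k) (le_of_lt (inv_pos.2 (hM0 k)))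
        _ = 1 := inv_mul_cancel₀ (ne_of_gt (hM0 k))
    have h3 : ‖(M k)⁻¹ • p k‖ ≤ 1 := by
      rw [norm_smul, Real.norm_eq_abs, abs_of_nonneg (le_of_lt (inv_pos.2 (hM0 k)))]
      calc (M k)⁻¹ * ‖p k‖ ≤ (M k)⁻¹ * M k :=
            mul_le_mul_of_nonneg_left (hMp k) (le_of_lt (inv_pos.2 (hM0 k)))
        _ = 1 := inv_mul_cancel₀ (ne_of_gt (hM0 k))
    simp only [Prod.norm_def, Real.norm_eq_abs]
    exact max_le h1 (max_le h2 h3)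
  obtain ⟨L, _, φ, hφmono, hφt⟩ :=
    (isCompact_closedBall (0 : ℝ × ((Fin n → ℝ) × (Fin n → ℝ))) 1).tendsto_subseq hQball
  have hμt : Tendsto (fun k => (M (φ k))⁻¹) atTop (nhds L.1) :=
    (continuous_fst.tendsto L).comp hφt
  have hut : Tendsto (fun k => (M (φ k))⁻¹ • x (φ k)) atTop (nhds L.2.1) :=
    ((continuous_fst.comp continuous_snd).tendsto L).comp hφt
  have hvt : Tendsto (fun k => (M (φ k))⁻¹ • p (φ k)) atTop (nhds L.2.2) :=
    ((continuous_snd.comp continuous_snd).tendsto L).comp hφt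
  have hwφ : Tendsto (fun k => w (φ k)) atTop (nhds z) := hwz.comp hφmono.tendsto_atTop
  by_cases hμ0 : L.1 = 0
  · -- degenerate case: normalization blows up, contradiction with pointedness
    exfalso
    rw [hμ0] at hμt
    have hMtop : Tendsto (fun k => M (φ k)) atTop atTop :=
      tendsto_atTop_of_inv_tendsto_zero (fun k => hM1 (φ k)) hμt
    have hu_rec : L.2.1 ∈ recCone A :=
      smul_tendsto_mem_recCone hA hAc (fun k => hx (φ k))
        (fun k => le_of_lt (inv_pos.2 (hM0 (φ k)))) hμt hut
    have hv_mem : L.2.2 ∈ K' :=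
      hK.mem_of_tendsto hvt (Eventually.of_forall fun k =>
        hKs _ (le_of_lt (inv_pos.2 (hM0 (φ k)))) _ (hp (φ k)))
    have hsum : L.2.1 + L.2.2 = 0 := by
      have h1 : Tendsto (fun k => (M (φ k))⁻¹ • w (φ k)) atTop (nhds ((0:ℝ) • z)) :=
        hμt.smul hwφ
      have h2 : Tendsto (fun k => (M (φ k))⁻¹ • w (φ k)) atTop (nhds (L.2.1 + L.2.2)) := by
        have heq : (fun k => (M (φ k))⁻¹ • w (φ k)) =
            fun k => (M (φ k))⁻¹ • x (φ k) + (M (φ k))⁻¹ • p (φ k) := by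
          funext k; rw [← hxp (φ k), smul_add]
        rw [heq]; exact hut.add hvt
      have := tendsto_nhds_unique h2 h1
      simpa using this
    obtain ⟨hu0, hv0⟩ := hpt _ hu_rec _ hv_mem hsum
    -- but the max of the normalized norms is eventually 1
    have hev : ∀ᶠ k in atTop, max ‖(M (φ k))⁻¹ • x (φ k)‖ ‖(M (φ k))⁻¹ • p (φ k)‖ = 1 := by
      filter_upwards [hMtop.eventually_gt_atTop 1] with k hk
      have hMeq : M (φ k) = max ‖x (φ k)‖ ‖p (φ k)‖ := by
        rcases max_cases 1 (max ‖x (φ k)‖ ‖p (φ k)‖) with ⟨h1, h2⟩ | ⟨h1, h2⟩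
        · exfalso
          rw [show M (φ k) = 1 ⊔ (‖x (φ k)‖ ⊔ ‖p (φ k)‖) from rfl, h1] at hk
          exact lt_irrefl _ hk
        · exact h1
      have hinv : (0:ℝ) ≤ (M (φ k))⁻¹ := le_of_lt (inv_pos.2 (hM0 (φ k)))
      rw [norm_smul, norm_smul, Real.norm_eq_abs, abs_of_nonneg hinv,
        ← mul_max_of_nonneg _ _ hinv, ← hMeq, inv_mul_cancel₀ (ne_of_gt (hM0 (φ k)))]
    have h1 : Tendsto (fun k => max ‖(M (φ k))⁻¹ • x (φ k)‖ ‖(M (φ k))⁻¹ • p (φ k)‖)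
        atTop (nhds (max ‖L.2.1‖ ‖L.2.2‖)) := hut.norm.max hvt.norm
    have h2 : Tendsto (fun k => max ‖(M (φ k))⁻¹ • x (φ k)‖ ‖(M (φ k))⁻¹ • p (φ k)‖)
        atTop (nhds 1) := Tendsto.congr' (hev.mono fun k hk => hk.symm) tendsto_const_nhds
    have := tendsto_nhds_unique h1 h2
    rw [hu0, hv0] at this
    simp at this
  · -- nondegenerate: everything converges
    have hμpos : 0 < L.1 := by
      rcases lt_or_eq_of_le (ge_of_tendsto hμt (Eventually.of_forall fun k =>
        le_of_lt (inv_pos.2 (hM0 (φ k))))) with h | h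
      · exact h
      · exact absurd h.symm hμ0
    have hMt : Tendsto (fun k => M (φ k)) atTop (nhds L.1⁻¹) := by
      have := hμt.inv₀ hμ0
      simpa [inv_inv] using this
    have hxt : Tendsto (fun k => x (φ k)) atTop (nhds (L.1⁻¹ • L.2.1)) := by
      have h := hMt.smul hut
      have heq : (fun k => M (φ k) • ((M (φ k))⁻¹ • x (φ k))) = fun k => x (φ k) := by
        funext k; rw [smul_smul, mul_inv_cancel₀ (ne_of_gt (hM0 (φ k))), one_smul]
      rwa [heq] at h
    have hpt2 : Tendsto (fun k => p (φ k)) atTop (nhds (L.1⁻¹ • L.2.2)) := by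
      have h := hMt.smul hvt
      have heq : (fun k => M (φ k) • ((M (φ k))⁻¹ • p (φ k))) = fun k => p (φ k) := by
        funext k; rw [smul_smul, mul_inv_cancel₀ (ne_of_gt (hM0 (φ k))), one_smul]
      rwa [heq] at h
    have hxm : L.1⁻¹ • L.2.1 ∈ A := hA.mem_of_tendsto hxt (Eventually.of_forall fun k => hx (φ k))
    have hpm : L.1⁻¹ • L.2.2 ∈ K' := hK.mem_of_tendsto hpt2 (Eventually.of_forall fun k => hp (φ k))
    have hz : L.1⁻¹ • L.2.1 + L.1⁻¹ • L.2.2 = z := by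
      refine tendsto_nhds_unique (hxt.add hpt2) ?_
      have heq : (fun k => x (φ k) + p (φ k)) = fun k => w (φ k) := by
        funext k; rw [hxp (φ k)]
      rwa [← heq] at hwφ
    exact Set.mem_add.2 ⟨_, hxm, _, hpm, hz⟩
lemma recCone_add_subset {A K' : Set (Fin n → ℝ)}
    (hA : IsClosed A) (hAc : Convex ℝ A) (hA0 : A.Nonempty)
    (hK : IsClosed K') (hKs : ∀ s : ℝ, 0 ≤ s → ∀ r ∈ K', s • r ∈ K')
    (hK0 : (0 : Fin n → ℝ) ∈ K')
    (hpt : ∀ u ∈ recCone A, ∀ v ∈ K', u + v = 0 → u = 0 ∧ v = 0) :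
    recCone (A + K') ⊆ recCone A + K' := by
  intro r hr
  obtain ⟨y₀, hy₀⟩ := hA0
  have hy₀' : y₀ ∈ A + K' := Set.mem_add.2 ⟨y₀, hy₀, 0, hK0, add_zero y₀⟩
  have hmem : ∀ k : ℕ, y₀ + (k : ℝ) • r ∈ A + K' := fun k => hr y₀ hy₀' k (Nat.cast_nonneg k)
  choose y hy p hp hyp using fun k => Set.mem_add.1 (hmem k)
  set M : ℕ → ℝ := fun k => max ((k : ℝ) + 1) (max ‖y k‖ ‖p k‖) with hM
  have hMk : ∀ k : ℕ, (k : ℝ) + 1 ≤ M k := fun k => le_max_left _ _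
  have hM1 : ∀ k, 1 ≤ M k := fun k => le_trans (by simp : (1:ℝ) ≤ (k:ℝ)+1) (hMk k)
  have hM0 : ∀ k, 0 < M k := fun k => lt_of_lt_of_le zero_lt_one (hM1 k)
  have hMy : ∀ k, ‖y k‖ ≤ M k := fun k => le_trans (le_max_left _ _) (le_max_right _ _)
  have hMp : ∀ k, ‖p k‖ ≤ M k := fun k => le_trans (le_max_right _ _) (le_max_right _ _)
  have hMtop : Tendsto M atTop atTop :=
    tendsto_atTop_mono hMk (tendsto_atTop_add_const_right _ _ tendsto_natCast_atTop_atTop)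
  have hMinv : Tendsto (fun k => (M k)⁻¹) atTop (nhds 0) :=
    tendsto_inv_atTop_zero.comp hMtop
  have hMinv0 : ∀ k, (0:ℝ) ≤ (M k)⁻¹ := fun k => le_of_lt (inv_pos.2 (hM0 k))
  set Q : ℕ → ℝ × ((Fin n → ℝ) × (Fin n → ℝ)) :=
    fun k => ((M k)⁻¹ * ((k : ℝ) + 1), ((M k)⁻¹ • y k, (M k)⁻¹ • p k)) with hQ
  have hQball : ∀ k, Q k ∈ Metric.closedBall (0 : ℝ × ((Fin n → ℝ) × (Fin n → ℝ))) 1 := by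
    intro k
    rw [Metric.mem_closedBall, dist_zero_right]
    have h1 : |(M k)⁻¹ * ((k : ℝ) + 1)| ≤ 1 := by
      rw [abs_of_nonneg (mul_nonneg (hMinv0 k) (by positivity))]
      calc (M k)⁻¹ * ((k : ℝ) + 1) ≤ (M k)⁻¹ * M k :=
            mul_le_mul_of_nonneg_left (hMk k) (hMinv0 k)
        _ = 1 := inv_mul_cancel₀ (ne_of_gt (hM0 k))
    have h2 : ‖(M k)⁻¹ • y k‖ ≤ 1 := by
      rw [norm_smul, Real.norm_eq_abs, abs_of_nonneg (hMinv0 k)]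
      calc (M k)⁻¹ * ‖y k‖ ≤ (M k)⁻¹ * M k := mul_le_mul_of_nonneg_left (hMy k) (hMinv0 k)
        _ = 1 := inv_mul_cancel₀ (ne_of_gt (hM0 k))
    have h3 : ‖(M k)⁻¹ • p k‖ ≤ 1 := by
      rw [norm_smul, Real.norm_eq_abs, abs_of_nonneg (hMinv0 k)]
      calc (M k)⁻¹ * ‖p k‖ ≤ (M k)⁻¹ * M k := mul_le_mul_of_nonneg_left (hMp k) (hMinv0 k)
        _ = 1 := inv_mul_cancel₀ (ne_of_gt (hM0 k))
    simp only [Prod.norm_def, Real.norm_eq_abs]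
    exact max_le h1 (max_le h2 h3)
  obtain ⟨L, _, φ, hφmono, hφt⟩ :=
    (isCompact_closedBall (0 : ℝ × ((Fin n → ℝ) × (Fin n → ℝ))) 1).tendsto_subseq hQball
  have hγt : Tendsto (fun k => (M (φ k))⁻¹ * ((φ k : ℝ) + 1)) atTop (nhds L.1) :=
    (continuous_fst.tendsto L).comp hφt
  have hdt : Tendsto (fun k => (M (φ k))⁻¹ • y (φ k)) atTop (nhds L.2.1) :=
    ((continuous_fst.comp continuous_snd).tendsto L).comp hφt
  have hqt : Tendsto (fun k => (M (φ k))⁻¹ • p (φ k)) atTop (nhds L.2.2) :=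
    ((continuous_snd.comp continuous_snd).tendsto L).comp hφt
  have hMinvφ : Tendsto (fun k => (M (φ k))⁻¹) atTop (nhds 0) :=
    hMinv.comp hφmono.tendsto_atTop
  -- limit of (M (φ k))⁻¹ * (φ k)
  have hγt' : Tendsto (fun k => (M (φ k))⁻¹ * (φ k : ℝ)) atTop (nhds L.1) := by
    have heq : (fun k => (M (φ k))⁻¹ * (φ k : ℝ)) =
        fun k => (M (φ k))⁻¹ * ((φ k : ℝ) + 1) - (M (φ k))⁻¹ := by
      funext k; ring
    rw [heq]
    simpa using hγt.sub hMinvφ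
  -- d ∈ recCone A, q ∈ K'
  have hd_rec : L.2.1 ∈ recCone A :=
    smul_tendsto_mem_recCone hA hAc (fun k => hy (φ k)) (fun k => hMinv0 (φ k)) hMinvφ hdt
  have hq_mem : L.2.2 ∈ K' :=
    hK.mem_of_tendsto hqt (Eventually.of_forall fun k => hKs _ (hMinv0 (φ k)) _ (hp (φ k)))
  -- the limit equation d + q = γ • r
  have hsum : L.2.1 + L.2.2 = L.1 • r := by
    have h1 : Tendsto (fun k => (M (φ k))⁻¹ • (y₀ + (φ k : ℝ) • r)) atTop
        (nhds ((0:ℝ) • y₀ + L.1 • r)) := by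
      have heq : (fun k => (M (φ k))⁻¹ • (y₀ + (φ k : ℝ) • r)) =
          fun k => (M (φ k))⁻¹ • y₀ + ((M (φ k))⁻¹ * (φ k : ℝ)) • r := by
        funext k; rw [smul_add, smul_smul]
      rw [heq]
      exact (hMinvφ.smul_const y₀).add (hγt'.smul_const r)
    have h2 : Tendsto (fun k => (M (φ k))⁻¹ • (y₀ + (φ k : ℝ) • r)) atTop
        (nhds (L.2.1 + L.2.2)) := by
      have heq : (fun k => (M (φ k))⁻¹ • (y₀ + (φ k : ℝ) • r)) =
          fun k => (M (φ k))⁻¹ • y (φ k) + (M (φ k))⁻¹ • p (φ k) := by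
        funext k; rw [← hyp (φ k), smul_add]
      rw [heq]
      exact hdt.add hqt
    have := tendsto_nhds_unique h2 h1
    simpa using this
  have hγnn : 0 ≤ L.1 :=
    ge_of_tendsto hγt (Eventually.of_forall fun k =>
      mul_nonneg (hMinv0 (φ k)) (by positivity))
  by_cases hγ0 : L.1 = 0
  · exfalso
    rw [hγ0, zero_smul] at hsum
    obtain ⟨hd0, hq0⟩ := hpt _ hd_rec _ hq_mem hsum
    -- eventually M (φ k) = max ‖y‖ ‖p‖, so max of normalized norms is 1
    have hsmall : ∀ᶠ k in atTop, (M (φ k))⁻¹ * ((φ k : ℝ) + 1) < 1 := by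
      rw [hγ0] at hγt
      exact hγt.eventually_lt_const zero_lt_one
    have hev : ∀ᶠ k in atTop, max ‖(M (φ k))⁻¹ • y (φ k)‖ ‖(M (φ k))⁻¹ • p (φ k)‖ = 1 := by
      filter_upwards [hsmall] with k hk
      have hlt : (φ k : ℝ) + 1 < M (φ k) := by
        by_contra hcon
        push_neg at hcon
        have h1 : (M (φ k))⁻¹ * ((φ k : ℝ) + 1) ≥ (M (φ k))⁻¹ * M (φ k) :=
          mul_le_mul_of_nonneg_left hcon (hMinv0 (φ k))
        rw [inv_mul_cancel₀ (ne_of_gt (hM0 (φ k)))] at h1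
        linarith
      have hMeq : M (φ k) = max ‖y (φ k)‖ ‖p (φ k)‖ := by
        rcases max_cases ((φ k : ℝ) + 1) (max ‖y (φ k)‖ ‖p (φ k)‖) with ⟨h1, h2⟩ | ⟨h1, h2⟩
        · exfalso
          rw [show M (φ k) = ((φ k : ℝ) + 1) ⊔ (‖y (φ k)‖ ⊔ ‖p (φ k)‖) from rfl, h1] at hlt
          exact lt_irrefl _ hlt
        · exact h1
      have hny : ‖(M (φ k))⁻¹ • y (φ k)‖ = (M (φ k))⁻¹ * ‖y (φ k)‖ := by
        rw [norm_smul, Real.norm_eq_abs, abs_of_nonneg (hMinv0 (φ k))]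
      have hnp : ‖(M (φ k))⁻¹ • p (φ k)‖ = (M (φ k))⁻¹ * ‖p (φ k)‖ := by
        rw [norm_smul, Real.norm_eq_abs, abs_of_nonneg (hMinv0 (φ k))]
      rw [hny, hnp, ← mul_max_of_nonneg _ _ (hMinv0 (φ k)), ← hMeq,
        inv_mul_cancel₀ (ne_of_gt (hM0 (φ k)))]
    have h1 : Tendsto (fun k => max ‖(M (φ k))⁻¹ • y (φ k)‖ ‖(M (φ k))⁻¹ • p (φ k)‖)
        atTop (nhds (max ‖L.2.1‖ ‖L.2.2‖)) := hdt.norm.max hqt.norm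
    have h2 : Tendsto (fun k => max ‖(M (φ k))⁻¹ • y (φ k)‖ ‖(M (φ k))⁻¹ • p (φ k)‖)
        atTop (nhds 1) := Tendsto.congr' (hev.mono fun k hk => hk.symm) tendsto_const_nhds
    have := tendsto_nhds_unique h1 h2
    rw [hd0, hq0] at this
    simp at this
  · have hγpos : 0 < L.1 := lt_of_le_of_ne hγnn (Ne.symm hγ0)
    have hreq : r = L.1⁻¹ • L.2.1 + L.1⁻¹ • L.2.2 := by
      rw [← smul_add, hsum, smul_smul, inv_mul_cancel₀ hγ0, one_smul]
    rw [hreq]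
    exact Set.mem_add.2 ⟨_, recCone_smul (le_of_lt (inv_pos.2 hγpos)) hd_rec,
      _, hKs _ (le_of_lt (inv_pos.2 hγpos)) _ hq_mem, rfl⟩
lemma isClosed_convexJoin' {C D : Set (Fin n → ℝ)}
    (hC : IsClosed C) (hCc : Convex ℝ C) (hC0 : C.Nonempty)
    (hD : IsClosed D) (hDc : Convex ℝ D) (hD0 : D.Nonempty)
    (hpt : ∀ u ∈ recCone C, ∀ v ∈ recCone D, u + v = 0 → u = 0 ∧ v = 0)
    (habsC : ∀ z ∈ C, ∀ w ∈ recCone D, z + w ∈ C)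
    (habsD : ∀ z ∈ D, ∀ w ∈ recCone C, z + w ∈ D) :
    IsClosed (convexJoin ℝ C D) := by
  refine IsSeqClosed.isClosed ?_
  intro w z hw hwz
  have h : ∀ k, ∃ x, x ∈ C ∧ ∃ y, y ∈ D ∧ ∃ θ η : ℝ,
      0 ≤ θ ∧ 0 ≤ η ∧ θ + η = 1 ∧ θ • x + η • y = w k := by
    intro k
    obtain ⟨x, hx, y, hy, hseg⟩ := mem_convexJoin.1 (hw k)
    obtain ⟨θ, η, hθ, hη, hθη, heq⟩ := hseg
    exact ⟨x, hx, y, hy, θ, η, hθ, hη, hθη, heq⟩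
  choose x hx y hy θ η hθ hη hθη heq using h
  set u : ℕ → Fin n → ℝ := fun k => θ k • x k with hu_def
  set v : ℕ → Fin n → ℝ := fun k => η k • y k with hv_def
  have hθ1 : ∀ k, θ k ≤ 1 := fun k => by linarith [hθη k, hη k]
  have hη1 : ∀ k, η k ≤ 1 := fun k => by linarith [hθη k, hθ k]
  set M : ℕ → ℝ := fun k => max 1 (max ‖u k‖ ‖v k‖) with hM
  have hM1 : ∀ k, 1 ≤ M k := fun k => le_max_left _ _
  have hM0 : ∀ k, 0 < M k := fun k => lt_of_lt_of_le zero_lt_one (hM1 k)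
  have hMinv0 : ∀ k, (0:ℝ) ≤ (M k)⁻¹ := fun k => le_of_lt (inv_pos.2 (hM0 k))
  have hMu : ∀ k, ‖u k‖ ≤ M k := fun k => le_trans (le_max_left _ _) (le_max_right _ _)
  have hMv : ∀ k, ‖v k‖ ≤ M k := fun k => le_trans (le_max_right _ _) (le_max_right _ _)
  set Q : ℕ → ℝ × (ℝ × ((Fin n → ℝ) × (Fin n → ℝ))) :=
    fun k => (θ k, ((M k)⁻¹, ((M k)⁻¹ • u k, (M k)⁻¹ • v k))) with hQ
  have hQball : ∀ k, Q k ∈ Metric.closedBall (0 : ℝ × (ℝ × ((Fin n → ℝ) × (Fin n → ℝ)))) 1 := by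
    intro k
    rw [Metric.mem_closedBall, dist_zero_right]
    have h0 : |θ k| ≤ 1 := by rw [abs_of_nonneg (hθ k)]; exact hθ1 k
    have h1 : |(M k)⁻¹| ≤ 1 := by
      rw [abs_of_nonneg (hMinv0 k)]
      exact inv_le_one_of_one_le₀ (hM1 k)
    have h2 : ‖(M k)⁻¹ • u k‖ ≤ 1 := by
      rw [norm_smul, Real.norm_eq_abs, abs_of_nonneg (hMinv0 k)]
      calc (M k)⁻¹ * ‖u k‖ ≤ (M k)⁻¹ * M k := mul_le_mul_of_nonneg_left (hMu k) (hMinv0 k)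
        _ = 1 := inv_mul_cancel₀ (ne_of_gt (hM0 k))
    have h3 : ‖(M k)⁻¹ • v k‖ ≤ 1 := by
      rw [norm_smul, Real.norm_eq_abs, abs_of_nonneg (hMinv0 k)]
      calc (M k)⁻¹ * ‖v k‖ ≤ (M k)⁻¹ * M k := mul_le_mul_of_nonneg_left (hMv k) (hMinv0 k)
        _ = 1 := inv_mul_cancel₀ (ne_of_gt (hM0 k))
    simp only [Prod.norm_def, Real.norm_eq_abs]
    exact max_le h0 (max_le h1 (max_le h2 h3))
  obtain ⟨L, _, φ, hφmono, hφt⟩ :=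
    (isCompact_closedBall (0 : ℝ × (ℝ × ((Fin n → ℝ) × (Fin n → ℝ)))) 1).tendsto_subseq hQball
  have hat : Tendsto (fun k => θ (φ k)) atTop (nhds L.1) :=
    (continuous_fst.tendsto L).comp hφt
  have hμt : Tendsto (fun k => (M (φ k))⁻¹) atTop (nhds L.2.1) :=
    ((continuous_fst.comp continuous_snd).tendsto L).comp hφt
  have hut : Tendsto (fun k => (M (φ k))⁻¹ • u (φ k)) atTop (nhds L.2.2.1) :=
    ((continuous_fst.comp (continuous_snd.comp continuous_snd)).tendsto L).comp hφt
  have hvt : Tendsto (fun k => (M (φ k))⁻¹ • v (φ k)) atTop (nhds L.2.2.2) :=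
    ((continuous_snd.comp (continuous_snd.comp continuous_snd)).tendsto L).comp hφt
  have hηt : Tendsto (fun k => η (φ k)) atTop (nhds (1 - L.1)) := by
    have heq2 : (fun k => η (φ k)) = fun k => 1 - θ (φ k) := by
      funext k; linarith [hθη (φ k)]
    rw [heq2]
    exact tendsto_const_nhds.sub hat
  have hwφ : Tendsto (fun k => w (φ k)) atTop (nhds z) := hwz.comp hφmono.tendsto_atTop
  have hwuv : ∀ k, u k + v k = w k := fun k => heq k
  have ha0 : 0 ≤ L.1 := ge_of_tendsto hat (Eventually.of_forall fun k => hθ (φ k))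
  have ha1 : L.1 ≤ 1 := le_of_tendsto hat (Eventually.of_forall fun k => hθ1 (φ k))
  by_cases hμ0 : L.2.1 = 0
  · -- degenerate : contradiction with pointedness
    exfalso
    rw [hμ0] at hμt
    have hMtop : Tendsto (fun k => M (φ k)) atTop atTop :=
      tendsto_atTop_of_inv_tendsto_zero (fun k => hM1 (φ k)) hμt
    have hu_rec : L.2.2.1 ∈ recCone C := by
      refine smul_tendsto_mem_recCone hC hCc (fun k => hx (φ k))
        (s := fun k => θ (φ k) * (M (φ k))⁻¹)
        (fun k => mul_nonneg (hθ (φ k)) (hMinv0 (φ k))) ?_ ?_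
      · simpa using hat.mul hμt
      · have heq2 : (fun k => (θ (φ k) * (M (φ k))⁻¹) • x (φ k)) =
            fun k => (M (φ k))⁻¹ • u (φ k) := by
          funext k; rw [hu_def]; simp only; rw [smul_smul, mul_comm]
        rw [heq2]; exact hut
    have hv_rec : L.2.2.2 ∈ recCone D := by
      refine smul_tendsto_mem_recCone hD hDc (fun k => hy (φ k))
        (s := fun k => η (φ k) * (M (φ k))⁻¹)
        (fun k => mul_nonneg (hη (φ k)) (hMinv0 (φ k))) ?_ ?_
      · simpa using hηt.mul hμt
      · have heq2 : (fun k => (η (φ k) * (M (φ k))⁻¹) • y (φ k)) =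
            fun k => (M (φ k))⁻¹ • v (φ k) := by
          funext k; rw [hv_def]; simp only; rw [smul_smul, mul_comm]
        rw [heq2]; exact hvt
    have hsum : L.2.2.1 + L.2.2.2 = 0 := by
      have h1 : Tendsto (fun k => (M (φ k))⁻¹ • w (φ k)) atTop (nhds ((0:ℝ) • z)) :=
        hμt.smul hwφ
      have h2 : Tendsto (fun k => (M (φ k))⁻¹ • w (φ k)) atTop
          (nhds (L.2.2.1 + L.2.2.2)) := by
        have heq2 : (fun k => (M (φ k))⁻¹ • w (φ k)) =
            fun k => (M (φ k))⁻¹ • u (φ k) + (M (φ k))⁻¹ • v (φ k) := by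
          funext k; rw [← hwuv (φ k), smul_add]
        rw [heq2]; exact hut.add hvt
      have := tendsto_nhds_unique h2 h1
      simpa using this
    obtain ⟨hu0, hv0⟩ := hpt _ hu_rec _ hv_rec hsum
    have hev : ∀ᶠ k in atTop, max ‖(M (φ k))⁻¹ • u (φ k)‖ ‖(M (φ k))⁻¹ • v (φ k)‖ = 1 := by
      filter_upwards [hMtop.eventually_gt_atTop 1] with k hk
      have hMeq : M (φ k) = max ‖u (φ k)‖ ‖v (φ k)‖ := by
        rcases max_cases 1 (max ‖u (φ k)‖ ‖v (φ k)‖) with ⟨h1, h2⟩ | ⟨h1, h2⟩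
        · exfalso
          rw [show M (φ k) = 1 ⊔ (‖u (φ k)‖ ⊔ ‖v (φ k)‖) from rfl, h1] at hk
          exact lt_irrefl _ hk
        · exact h1
      have hnu : ‖(M (φ k))⁻¹ • u (φ k)‖ = (M (φ k))⁻¹ * ‖u (φ k)‖ := by
        rw [norm_smul, Real.norm_eq_abs, abs_of_nonneg (hMinv0 (φ k))]
      have hnv : ‖(M (φ k))⁻¹ • v (φ k)‖ = (M (φ k))⁻¹ * ‖v (φ k)‖ := by
        rw [norm_smul, Real.norm_eq_abs, abs_of_nonneg (hMinv0 (φ k))]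
      rw [hnu, hnv, ← mul_max_of_nonneg _ _ (hMinv0 (φ k)), ← hMeq,
        inv_mul_cancel₀ (ne_of_gt (hM0 (φ k)))]
    have h1 : Tendsto (fun k => max ‖(M (φ k))⁻¹ • u (φ k)‖ ‖(M (φ k))⁻¹ • v (φ k)‖)
        atTop (nhds (max ‖L.2.2.1‖ ‖L.2.2.2‖)) := hut.norm.max hvt.norm
    have h2 : Tendsto (fun k => max ‖(M (φ k))⁻¹ • u (φ k)‖ ‖(M (φ k))⁻¹ • v (φ k)‖)
        atTop (nhds 1) := Tendsto.congr' (hev.mono fun k hk => hk.symm) tendsto_const_nhds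
    have := tendsto_nhds_unique h1 h2
    rw [hu0, hv0] at this
    simp at this
  · -- nondegenerate case
    have hμpos : 0 < L.2.1 :=
      lt_of_le_of_ne (ge_of_tendsto hμt (Eventually.of_forall fun k => hMinv0 (φ k)))
        (Ne.symm hμ0)
    have hMt : Tendsto (fun k => M (φ k)) atTop (nhds L.2.1⁻¹) := by
      have := hμt.inv₀ hμ0
      simpa [inv_inv] using this
    have hu2 : Tendsto (fun k => u (φ k)) atTop (nhds (L.2.1⁻¹ • L.2.2.1)) := by
      have h := hMt.smul hut
      have heq2 : (fun k => M (φ k) • ((M (φ k))⁻¹ • u (φ k))) = fun k => u (φ k) := by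
        funext k; rw [smul_smul, mul_inv_cancel₀ (ne_of_gt (hM0 (φ k))), one_smul]
      rwa [heq2] at h
    have hv2 : Tendsto (fun k => v (φ k)) atTop (nhds (L.2.1⁻¹ • L.2.2.2)) := by
      have h := hMt.smul hvt
      have heq2 : (fun k => M (φ k) • ((M (φ k))⁻¹ • v (φ k))) = fun k => v (φ k) := by
        funext k; rw [smul_smul, mul_inv_cancel₀ (ne_of_gt (hM0 (φ k))), one_smul]
      rwa [heq2] at h
    set U := L.2.1⁻¹ • L.2.2.1 with hU_def
    set V := L.2.1⁻¹ • L.2.2.2 with hV_def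
    have hzUV : U + V = z := by
      refine tendsto_nhds_unique (hu2.add hv2) ?_
      have heq2 : (fun k => u (φ k) + v (φ k)) = fun k => w (φ k) := by
        funext k; rw [hwuv (φ k)]
      rwa [← heq2] at hwφ
    rcases eq_or_lt_of_le ha0 with ha0' | hapos
    · -- L.1 = 0 : z ∈ D
      have hU : U ∈ recCone C := by
        refine smul_tendsto_mem_recCone hC hCc (fun k => hx (φ k)) (fun k => hθ (φ k)) ?_ ?_
        · rw [← ha0'] at hat; exact hat
        · exact hu2
      have hηpos : ∀ᶠ k in atTop, (0:ℝ) < η (φ k) := by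
        rw [← ha0'] at hηt
        simp only [sub_zero] at hηt
        exact hηt.eventually (eventually_gt_nhds zero_lt_one)
      have hyt : Tendsto (fun k => y (φ k)) atTop (nhds ((1 - L.1)⁻¹ • V)) := by
        refine Tendsto.congr' ?_ ((hηt.inv₀ (by rw [← ha0']; norm_num)).smul hv2)
        filter_upwards [hηpos] with k hk
        rw [hv_def]; simp only
        rw [smul_smul, inv_mul_cancel₀ (ne_of_gt hk), one_smul]
      have hVD : (1 - L.1)⁻¹ • V ∈ D :=
        hD.mem_of_tendsto hyt (Eventually.of_forall fun k => hy (φ k))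
      have hVD' : V ∈ D := by
        have : (1 - L.1)⁻¹ • V = V := by rw [← ha0']; norm_num
        rwa [this] at hVD
      have : z ∈ D := by
        rw [← hzUV, add_comm]
        exact habsD V hVD' U hU
      exact subset_convexJoin_right hC0 this
    · rcases eq_or_lt_of_le ha1 with ha1' | halt
      · -- L.1 = 1 : z ∈ C
        have hV : V ∈ recCone D := by
          refine smul_tendsto_mem_recCone hD hDc (fun k => hy (φ k)) (fun k => hη (φ k)) ?_ ?_
          · rw [ha1'] at hηt; simpa using hηt
          · exact hv2
        have hθpos : ∀ᶠ k in atTop, (0:ℝ) < θ (φ k) := by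
          rw [ha1'] at hat
          exact hat.eventually (eventually_gt_nhds zero_lt_one)
        have hxt : Tendsto (fun k => x (φ k)) atTop (nhds (L.1⁻¹ • U)) := by
          refine Tendsto.congr' ?_ ((hat.inv₀ (by rw [ha1']; norm_num)).smul hu2)
          filter_upwards [hθpos] with k hk
          rw [hu_def]; simp only
          rw [smul_smul, inv_mul_cancel₀ (ne_of_gt hk), one_smul]
        have hUC : L.1⁻¹ • U ∈ C :=
          hC.mem_of_tendsto hxt (Eventually.of_forall fun k => hx (φ k))
        have hUC' : U ∈ C := by
          have : L.1⁻¹ • U = U := by rw [ha1']; norm_num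
          rwa [this] at hUC
        have : z ∈ C := by
          rw [← hzUV]
          exact habsC U hUC' V hV
        exact subset_convexJoin_left hD0 this
      · -- 0 < L.1 < 1
        have hbpos : 0 < 1 - L.1 := by linarith
        have hθpos : ∀ᶠ k in atTop, (0:ℝ) < θ (φ k) :=
          hat.eventually (eventually_gt_nhds hapos)
        have hηpos : ∀ᶠ k in atTop, (0:ℝ) < η (φ k) :=
          hηt.eventually (eventually_gt_nhds hbpos)
        have hxt : Tendsto (fun k => x (φ k)) atTop (nhds (L.1⁻¹ • U)) := by
          refine Tendsto.congr' ?_ ((hat.inv₀ (ne_of_gt hapos)).smul hu2)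
          filter_upwards [hθpos] with k hk
          rw [hu_def]; simp only
          rw [smul_smul, inv_mul_cancel₀ (ne_of_gt hk), one_smul]
        have hyt : Tendsto (fun k => y (φ k)) atTop (nhds ((1 - L.1)⁻¹ • V)) := by
          refine Tendsto.congr' ?_ ((hηt.inv₀ (ne_of_gt hbpos)).smul hv2)
          filter_upwards [hηpos] with k hk
          rw [hv_def]; simp only
          rw [smul_smul, inv_mul_cancel₀ (ne_of_gt hk), one_smul]
        have hUC : L.1⁻¹ • U ∈ C :=
          hC.mem_of_tendsto hxt (Eventually.of_forall fun k => hx (φ k))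
        have hVD : (1 - L.1)⁻¹ • V ∈ D :=
          hD.mem_of_tendsto hyt (Eventually.of_forall fun k => hy (φ k))
        refine mem_convexJoin.2 ⟨_, hUC, _, hVD, L.1, 1 - L.1, le_of_lt hapos,
          le_of_lt hbpos, by ring, ?_⟩
        rw [smul_inv_smul₀ (ne_of_gt hapos), smul_inv_smul₀ (ne_of_gt hbpos)]
        exact hzUV
lemma add_recCone_subset_closure_hull {A B : Set (Fin n → ℝ)} (hB0 : B.Nonempty) :
    A + recCone B ⊆ closure (convexHull ℝ (A ∪ B)) := by
  rintro z hz
  obtain ⟨x, hx, p, hp, rfl⟩ := Set.mem_add.1 hz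
  obtain ⟨y₀, hy₀⟩ := hB0
  set c : ℕ → ℝ := fun k => ((k : ℝ) + 1)⁻¹ with hc
  have hc0 : ∀ k, 0 < c k := fun k => by positivity
  have hc1 : ∀ k : ℕ, c k ≤ 1 := fun k =>
    inv_le_one_of_one_le₀ (by simp : (1:ℝ) ≤ (k : ℝ) + 1)
  have hct : Tendsto c atTop (nhds 0) := by
    rw [hc]; simpa [one_div] using tendsto_one_div_add_atTop_nhds_zero_nat (𝕜 := ℝ)
  have hwmem : ∀ k, (1 - c k) • x + c k • (y₀ + (c k)⁻¹ • p) ∈ convexHull ℝ (A ∪ B) := by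
    intro k
    refine (convex_convexHull ℝ (A ∪ B)) (subset_convexHull ℝ _ (Or.inl hx))
      (subset_convexHull ℝ _ (Or.inr (hp y₀ hy₀ (c k)⁻¹ (le_of_lt (inv_pos.2 (hc0 k))))))
      (by linarith [hc1 k]) (le_of_lt (hc0 k)) (by ring)
  have hwt : Tendsto (fun k => (1 - c k) • x + c k • (y₀ + (c k)⁻¹ • p)) atTop
      (nhds (x + p)) := by
    have heq : (fun k => (1 - c k) • x + c k • (y₀ + (c k)⁻¹ • p)) =
        fun k => (1 - c k) • x + (c k • y₀ + p) := by
      funext k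
      rw [smul_add, smul_smul, mul_inv_cancel₀ (ne_of_gt (hc0 k)), one_smul]
    rw [heq]
    have h1 : Tendsto (fun k => (1 - c k) • x + (c k • y₀ + p)) atTop
        (nhds ((1 - (0:ℝ)) • x + ((0:ℝ) • y₀ + p))) :=
      ((tendsto_const_nhds.sub hct).smul_const x).add
        ((hct.smul_const y₀).add tendsto_const_nhds)
    simpa using h1
  exact mem_closure_of_tendsto hwt (Eventually.of_forall hwmem)

theorem stmt_1 {n : ℕ} (S : Set (Fin n → ℝ))
    (hSclosed : IsClosed S) (hSconv : Convex ℝ S)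
    (hSpointed : ∀ r, r ∈ recCone S → -r ∈ recCone S → r = 0)
    (c₁ c₂ : Fin n → ℝ) (c₁₀ c₂₀ : ℝ)
    (S₁ S₂ : Set (Fin n → ℝ))
    (hS₁ : S₁ = {x ∈ S | c₁₀ ≤ dot c₁ x})
    (hS₂ : S₂ = {x ∈ S | c₂₀ ≤ dot c₂ x})
    (h12 : ¬ S₁ ⊆ S₂) (h21 : ¬ S₂ ⊆ S₁) :
    closure (convexHull ℝ (S₁ ∪ S₂)) =
      convexHull ℝ ((S₁ + recCone S₂) ∪ (S₂ + recCone S₁)) := by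
  obtain ⟨x₁, hx₁S₁, -⟩ := Set.not_subset.1 h12
  obtain ⟨x₂, hx₂S₂, -⟩ := Set.not_subset.1 h21
  have hne₁ : S₁.Nonempty := ⟨x₁, hx₁S₁⟩
  have hne₂ : S₂.Nonempty := ⟨x₂, hx₂S₂⟩
  have hS₁sub : S₁ ⊆ S := by rw [hS₁]; exact fun x hx => hx.1
  have hS₂sub : S₂ ⊆ S := by rw [hS₂]; exact fun x hx => hx.1
  have hS₁closed : IsClosed S₁ := by
    rw [hS₁]
    exact hSclosed.inter (isClosed_le continuous_const (continuous_dot c₁))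
  have hS₂closed : IsClosed S₂ := by
    rw [hS₂]
    exact hSclosed.inter (isClosed_le continuous_const (continuous_dot c₂))
  have hS₁conv : Convex ℝ S₁ := by
    rw [hS₁]
    intro x hx y hy a b ha hb hab
    refine ⟨hSconv hx.1 hy.1 ha hb hab, ?_⟩
    rw [dot_add', dot_smul', dot_smul']
    have h1 := mul_le_mul_of_nonneg_left hx.2 ha
    have h2 := mul_le_mul_of_nonneg_left hy.2 hb
    have h3 : a * c₁₀ + b * c₁₀ = c₁₀ := by rw [← add_mul, hab, one_mul]
    linarith
  have hS₂conv : Convex ℝ S₂ := by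
    rw [hS₂]
    intro x hx y hy a b ha hb hab
    refine ⟨hSconv hx.1 hy.1 ha hb hab, ?_⟩
    rw [dot_add', dot_smul', dot_smul']
    have h1 := mul_le_mul_of_nonneg_left hx.2 ha
    have h2 := mul_le_mul_of_nonneg_left hy.2 hb
    have h3 : a * c₂₀ + b * c₂₀ = c₂₀ := by rw [← add_mul, hab, one_mul]
    linarith
  have hK₁sub : recCone S₁ ⊆ recCone S := recCone_subset hSclosed hSconv hS₁sub hne₁
  have hK₂sub : recCone S₂ ⊆ recCone S := recCone_subset hSclosed hSconv hS₂sub hne₂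
  have hK₁closed : IsClosed (recCone S₁) := isClosed_recCone hS₁closed
  have hK₂closed : IsClosed (recCone S₂) := isClosed_recCone hS₂closed
  have hpt2 : ∀ u ∈ recCone S, ∀ v ∈ recCone S, u + v = 0 → u = 0 ∧ v = 0 := by
    intro u hu v hv huv
    have hvu : v = -u := eq_neg_of_add_eq_zero_right huv
    have hu0 : u = 0 := hSpointed u hu (hvu ▸ hv)
    exact ⟨hu0, by rw [hvu, hu0, neg_zero]⟩
  have hptC : ∀ u ∈ recCone S₁, ∀ v ∈ recCone S₂, u + v = 0 → u = 0 ∧ v = 0 :=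
    fun u hu v hv h => hpt2 u (hK₁sub hu) v (hK₂sub hv) h
  have hptD : ∀ u ∈ recCone S₂, ∀ v ∈ recCone S₁, u + v = 0 → u = 0 ∧ v = 0 :=
    fun u hu v hv h => hpt2 u (hK₂sub hu) v (hK₁sub hv) h
  have hCclosed : IsClosed (S₁ + recCone S₂) :=
    isClosed_add_of_pointed hS₁closed hS₁conv hK₂closed
      (fun s hs r hr => recCone_smul hs hr) hptC
  have hDclosed : IsClosed (S₂ + recCone S₁) :=
    isClosed_add_of_pointed hS₂closed hS₂conv hK₁closed
      (fun s hs r hr => recCone_smul hs hr) hptD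
  have hCconv : Convex ℝ (S₁ + recCone S₂) := hS₁conv.add (convex_recCone S₂)
  have hDconv : Convex ℝ (S₂ + recCone S₁) := hS₂conv.add (convex_recCone S₁)
  have hC0 : (S₁ + recCone S₂).Nonempty :=
    ⟨x₁, Set.mem_add.2 ⟨x₁, hx₁S₁, 0, zero_mem_recCone _, add_zero x₁⟩⟩
  have hD0 : (S₂ + recCone S₁).Nonempty :=
    ⟨x₂, Set.mem_add.2 ⟨x₂, hx₂S₂, 0, zero_mem_recCone _, add_zero x₂⟩⟩
  have hrecC : recCone (S₁ + recCone S₂) ⊆ recCone S₁ + recCone S₂ :=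
    recCone_add_subset hS₁closed hS₁conv hne₁ hK₂closed
      (fun s hs r hr => recCone_smul hs hr) (zero_mem_recCone _) hptC
  have hrecD : recCone (S₂ + recCone S₁) ⊆ recCone S₂ + recCone S₁ :=
    recCone_add_subset hS₂closed hS₂conv hne₂ hK₁closed
      (fun s hs r hr => recCone_smul hs hr) (zero_mem_recCone _) hptD
  have hrecCK : recCone (S₁ + recCone S₂) ⊆ recCone S := by
    intro r hr
    obtain ⟨a, ha, b, hb, rfl⟩ := Set.mem_add.1 (hrecC hr)
    exact recCone_add (hK₁sub ha) (hK₂sub hb)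
  have hrecDK : recCone (S₂ + recCone S₁) ⊆ recCone S := by
    intro r hr
    obtain ⟨a, ha, b, hb, rfl⟩ := Set.mem_add.1 (hrecD hr)
    exact recCone_add (hK₂sub ha) (hK₁sub hb)
  have habsC : ∀ z ∈ S₁ + recCone S₂, ∀ w ∈ recCone (S₂ + recCone S₁),
      z + w ∈ S₁ + recCone S₂ := by
    intro z hz w hw
    obtain ⟨a, ha, b, hb, rfl⟩ := Set.mem_add.1 (hrecD hw)
    obtain ⟨x, hxm, p, hpm, rfl⟩ := Set.mem_add.1 hz
    exact Set.mem_add.2 ⟨x + b, add_mem_of_mem_recCone hxm hb,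
      p + a, recCone_add hpm ha, by abel⟩
  have habsD : ∀ z ∈ S₂ + recCone S₁, ∀ w ∈ recCone (S₁ + recCone S₂),
      z + w ∈ S₂ + recCone S₁ := by
    intro z hz w hw
    obtain ⟨a, ha, b, hb, rfl⟩ := Set.mem_add.1 (hrecC hw)
    obtain ⟨x, hxm, p, hpm, rfl⟩ := Set.mem_add.1 hz
    exact Set.mem_add.2 ⟨x + b, add_mem_of_mem_recCone hxm hb,
      p + a, recCone_add hpm ha, by abel⟩
  have hJoin : IsClosed (convexJoin ℝ (S₁ + recCone S₂) (S₂ + recCone S₁)) :=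
    isClosed_convexJoin' hCclosed hCconv hC0 hDclosed hDconv hD0
      (fun u hu v hv h => hpt2 u (hrecCK hu) v (hrecDK hv) h)
      habsC habsD
  have hhull : convexHull ℝ ((S₁ + recCone S₂) ∪ (S₂ + recCone S₁)) =
      convexJoin ℝ (S₁ + recCone S₂) (S₂ + recCone S₁) :=
    Convex.convexHull_union hCconv hDconv hC0 hD0
  have hsubC : S₁ ⊆ S₁ + recCone S₂ := fun x hx =>
    Set.mem_add.2 ⟨x, hx, 0, zero_mem_recCone _, add_zero x⟩
  have hsubD : S₂ ⊆ S₂ + recCone S₁ := fun x hx =>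
    Set.mem_add.2 ⟨x, hx, 0, zero_mem_recCone _, add_zero x⟩
  refine Subset.antisymm ?_ ?_
  · rw [hhull]
    refine closure_minimal ?_ hJoin
    calc convexHull ℝ (S₁ ∪ S₂)
        ⊆ convexHull ℝ ((S₁ + recCone S₂) ∪ (S₂ + recCone S₁)) :=
          convexHull_mono (Set.union_subset_union hsubC hsubD)
      _ = convexJoin ℝ (S₁ + recCone S₂) (S₂ + recCone S₁) := hhull
  · refine convexHull_min (Set.union_subset ?_ ?_) ((convex_convexHull ℝ _).closure)
    · exact add_recCone_subset_closure_hull hne₂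
    · have h := add_recCone_subset_closure_hull (A := S₂) (B := S₁) hne₁
      rwa [Set.union_comm] at h
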